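/- For real parameters k > 0, σ > 0, η > 0, β ∈ (0,1), the cubic P(x) = x^3 - b x^2 + c x - d with b = (ση + k(1+η))/(1+ση) + 1 + β, c = (1+β)·ση/(1+ση) + kη/(1+ση) + β, d = βση/(1+ση) satisfies b > 1, c > 0, 0 < d < 1, 1 - d < b - c, b > c, and bc - d > 0. Consequently P has exactly one root (counting with multiplicity over ℂ) outside the closed unit disk, and the other two roots have modulus less than 1. -/

import Mathlib

private lemma stmt_7_countP_singleton {α : Type*} (p : α → Prop) [DecidablePred p] (a : α) :
    Multiset.countP p {a} = if p a then 1 else 0 := by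
  rw [← Multiset.cons_zero a, Multiset.countP_cons, Multiset.countP_zero, zero_add]

open Polynomial in
private lemma stmt_7_aux_quad (e w : ℝ) :
    ∃ z1 z2 : ℂ, (X^2 - C (e:ℂ) * X + C (w:ℂ)).roots = {z1, z2} ∧
      z1 + z2 = (e:ℂ) ∧ z1 * z2 = (w:ℂ) := by
  set q : ℂ[X] := X^2 - C (e:ℂ) * X + C (w:ℂ) with hq
  have hmon : q.Monic := by unfold q; monicity!
  have hdeg : q.natDegree = 2 := by unfold q; compute_degree!
  have hcard : q.roots.card = 2 := by
    rw [← hdeg]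
    exact (splits_iff_card_roots.mp (IsAlgClosed.splits q))
  obtain ⟨z1, z2, hz⟩ := Multiset.card_eq_two.mp hcard
  have hfact : q = (X - C z1) * (X - C z2) := by
    have h := C_leadingCoeff_mul_prod_multiset_X_sub_C (p := q) (by rw [hcard, hdeg])
    rw [hmon.leadingCoeff, map_one, one_mul, hz] at h
    simp only [Multiset.insert_eq_cons, Multiset.map_cons, Multiset.map_singleton,
      Multiset.prod_cons, Multiset.prod_singleton] at h
    exact h.symm
  have he0 := congrArg (Polynomial.eval 0) hfact
  have he1 := congrArg (Polynomial.eval 1) hfact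
  simp only [hq, eval_mul, eval_add, eval_sub, eval_pow, eval_X, eval_C] at he0 he1
  exact ⟨z1, z2, hz, by linear_combination he1 - he0, by linear_combination -he0⟩

private lemma stmt_7_aux_abs (e w : ℝ) (z1 z2 : ℂ) (hs : z1 + z2 = (e:ℂ))
    (hm : z1 * z2 = (w:ℂ))
    (hw0 : 0 < w) (hw1 : w < 1) (hq1 : 0 < 1 - e + w) (hq2 : 0 < 1 + e + w) :
    ‖z1‖ < 1 ∧ ‖z2‖ < 1 := by
  set x := z1.re; set y := z1.im
  have hz2 : z2 = (e:ℂ) - z1 := by linear_combination hs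
  have hre : x * (e - x) + y * y = w := by
    have := congrArg Complex.re hm
    simpa [hz2, Complex.mul_re, Complex.sub_re, Complex.sub_im] using this
  have him : y * (e - 2*x) = 0 := by
    have := congrArg Complex.im hm
    simp [hz2, Complex.mul_im, Complex.sub_re, Complex.sub_im] at this
    linarith
  have habs1 : ‖z1‖^2 = x^2 + y^2 := by
    rw [Complex.sq_norm, Complex.normSq_apply]; ring
  have habs2 : ‖z2‖^2 = (e - x)^2 + y^2 := by
    rw [Complex.sq_norm, Complex.normSq_apply, hz2]
    simp [Complex.sub_re, Complex.sub_im]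
    ring
  have key2 : x^2 + y^2 < 1 ∧ (e-x)^2 + y^2 < 1 := by
    rcases eq_or_ne y 0 with hy | hy
    · rw [hy] at hre ⊢
      simp only [mul_zero, zero_mul, add_zero, ne_eq, zero_pow, OfNat.ofNat_ne_zero,
        not_false_eq_true] at hre ⊢
      have h0' : 0 < x*(e-x) := by linarith
      have h1' : x*(e-x) < 1 := by linarith
      have h2' : 0 < (1-x)*(1-(e-x)) := by nlinarith
      have h3' : 0 < (1+x)*(1+(e-x)) := by nlinarith
      have hx : -1 < x ∧ x < 1 := ⟨by nlinarith, by nlinarith⟩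
      have hv : -1 < e-x ∧ e-x < 1 := ⟨by nlinarith, by nlinarith⟩
      constructor <;> nlinarith [hx.1, hx.2, hv.1, hv.2]
    · have hex : e = 2*x := by
        rcases mul_eq_zero.mp him with h | h
        · exact absurd h hy
        · linarith
      constructor <;> nlinarith [sq_nonneg y]
  constructor
  · nlinarith [norm_nonneg z1, key2.1, habs1]
  · nlinarith [norm_nonneg z2, key2.2, habs2]

open Polynomial in
private lemma stmt_7_aux_count (b c d : ℝ) (hb1 : 1 < b) (hc0 : 0 < c) (hd0 : 0 < d)
    (hd1 : d < 1) (h5 : 1 - d < b - c) :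
    Multiset.countP (fun z => 1 < ‖z‖)
      ((X ^ 3 - C (b : ℂ) * X ^ 2 + C (c : ℂ) * X - C (d : ℂ)).roots) = 1 ∧
    Multiset.countP (fun z => ‖z‖ < 1)
      ((X ^ 3 - C (b : ℂ) * X ^ 2 + C (c : ℂ) * X - C (d : ℂ)).roots) = 2 := by
  classical
  have hP1lt : 1 - b + c - d < 0 := by linarith
  obtain ⟨r, hr1, hroot⟩ : ∃ r : ℝ, 1 < r ∧ r^3 - b*r^2 + c*r - d = 0 := by
    have hcont : ContinuousOn (fun x : ℝ => x^3 - b*x^2 + c*x - d) (Set.Icc 1 (b+1)) := by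
      fun_prop
    have hle : (1:ℝ) ≤ b + 1 := by linarith
    have hmem : (0:ℝ) ∈ Set.Ioo ((fun x : ℝ => x^3 - b*x^2 + c*x - d) 1)
        ((fun x : ℝ => x^3 - b*x^2 + c*x - d) (b+1)) := by
      constructor
      · simpa using by nlinarith
      · simp only
        nlinarith
    obtain ⟨r, hr, hfr⟩ := intermediate_value_Ioo hle hcont hmem
    exact ⟨r, hr.1, hfr⟩
  have hr0 : (0:ℝ) < r := by linarith
  have hr' : r ≠ 0 := ne_of_gt hr0
  set w : ℝ := d / r with hw
  have hrw : r * w = d := by rw [hw]; field_simp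
  have hcw : c = w + (b - r) * r := by
    rw [hw]; field_simp; linarith
  have hw0 : 0 < w := by positivity
  have hw1 : w < 1 := by rw [hw, div_lt_one hr0]; linarith
  have hfactC : (X ^ 3 - C (b : ℂ) * X ^ 2 + C (c : ℂ) * X - C (d : ℂ)) =
      (X - C (r:ℂ)) * (X^2 - C ((b - r : ℝ):ℂ) * X + C ((w : ℝ):ℂ)) := by
    have h1 : (b:ℂ) = ((b-r:ℝ):ℂ) + (r:ℂ) := by push_cast; ring
    have h2 : (c:ℂ) = ((w:ℝ):ℂ) + ((b-r:ℝ):ℂ) * (r:ℂ) := by rw [hcw]; push_cast; ring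
    have h3 : (d:ℂ) = (r:ℂ) * ((w:ℝ):ℂ) := by rw [← hrw]; push_cast; ring
    rw [h1, h2, h3]
    simp only [map_add, map_mul]
    ring
  obtain ⟨z1, z2, hz, hs, hm⟩ := stmt_7_aux_quad (b - r) w
  have hid1 : (1 - r) * (1 - (b-r) + w) = 1 - b + c - d := by linear_combination -hcw - hrw
  have hid2 : (-1 - r) * (1 + (b-r) + w) = -1 - b - c - d := by linear_combination hcw - hrw
  have hq1 : 0 < 1 - (b - r) + w := by
    by_contra hcon
    push_neg at hcon
    have hnn : 0 ≤ (1 - r) * (1 - (b - r) + w) :=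
      mul_nonneg_of_nonpos_of_nonpos (by linarith) hcon
    linarith [hid1, hnn]
  have hq2 : 0 < 1 + (b - r) + w := by
    by_contra hcon
    push_neg at hcon
    have hnn : 0 ≤ (-1 - r) * (1 + (b - r) + w) :=
      mul_nonneg_of_nonpos_of_nonpos (by linarith) hcon
    linarith [hid2, hnn]
  have habs := stmt_7_aux_abs (b - r) w z1 z2 hs hm hw0 hw1 hq1 hq2
  have har : 1 < ‖((r:ℝ):ℂ)‖ := by
    rw [Complex.norm_real, Real.norm_eq_abs, abs_of_pos hr0]; exact hr1
  have hmonq : (X^2 - C ((b-r:ℝ):ℂ) * X + C ((w:ℝ):ℂ)).Monic := by monicity!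
  have hne : (X - C ((r:ℝ):ℂ)) * (X^2 - C ((b-r:ℝ):ℂ) * X + C ((w:ℝ):ℂ)) ≠ 0 :=
    mul_ne_zero (X_sub_C_ne_zero _) hmonq.ne_zero
  have hroots : (X ^ 3 - C (b : ℂ) * X ^ 2 + C (c : ℂ) * X - C (d : ℂ)).roots
      = ((r:ℝ):ℂ) ::ₘ z1 ::ₘ {z2} := by
    rw [hfactC, roots_mul hne, roots_X_sub_C, hz]
    rfl
  rw [hroots]
  have h1' : ¬ (1 < ‖z1‖) := not_lt.mpr habs.1.le
  have h2' : ¬ (1 < ‖z2‖) := not_lt.mpr habs.2.le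
  have har1 : (1:ℝ) < |r| := by rw [abs_of_pos hr0]; exact hr1
  have har2 : ¬ (|r| < 1) := not_lt.mpr har1.le
  constructor <;>
    simp [Multiset.countP_cons, stmt_7_countP_singleton, habs.1, habs.2, h1', h2', har1, har2]

open Polynomial in
open scoped Classical in
theorem stmt_7 (k σ η β : ℝ) (hk : 0 < k) (hσ : 0 < σ) (hη : 0 < η)
    (hβ0 : 0 < β) (hβ1 : β < 1)
    (b c d : ℝ)
    (hb : b = (σ * η + k * (1 + η)) / (1 + σ * η) + 1 + β)
    (hc : c = (1 + β) * (σ * η) / (1 + σ * η) + k * η / (1 + σ * η) + β)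
    (hd : d = β * σ * η / (1 + σ * η)) :
    1 < b ∧ 0 < c ∧ 0 < d ∧ d < 1 ∧ 1 - d < b - c ∧ c < b ∧ 0 < b * c - d ∧
    Multiset.countP (fun z => 1 < ‖z‖)
      ((X ^ 3 - C (b : ℂ) * X ^ 2 + C (c : ℂ) * X - C (d : ℂ)).roots) = 1 ∧
    Multiset.countP (fun z => ‖z‖ < 1)
      ((X ^ 3 - C (b : ℂ) * X ^ 2 + C (c : ℂ) * X - C (d : ℂ)).roots) = 2 := by
  have ht : (0:ℝ) < 1 + σ * η := by positivity
  have hb1 : 1 < b := by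
    rw [hb]; have : 0 < (σ * η + k * (1 + η)) / (1 + σ * η) := by positivity
    linarith
  have hc0 : 0 < c := by rw [hc]; positivity
  have hd0 : 0 < d := by rw [hd]; positivity
  have hd1 : d < 1 := by
    rw [hd, div_lt_one ht]; nlinarith
  have hcd : d < c := by
    rw [hc, hd]
    rw [← add_div, div_add' _ _ _ (ne_of_gt ht), div_lt_div_iff₀ ht ht]
    nlinarith [mul_pos ht ht, mul_pos (mul_pos hσ hη) ht, mul_pos (mul_pos hk hη) ht,
      mul_pos hβ0 ht]
  have key : b - c - (1 - d) = k / (1 + σ * η) := by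
    rw [hb, hc, hd]; field_simp; ring
  have h5 : 1 - d < b - c := by
    have : 0 < k / (1 + σ * η) := by positivity
    linarith
  have h6 : c < b := by linarith
  have h7 : 0 < b * c - d := by nlinarith
  obtain ⟨hcnt1, hcnt2⟩ := stmt_7_aux_count b c d hb1 hc0 hd0 hd1 h5
  exact ⟨hb1, hc0, hd0, hd1, h5, h6, h7, hcnt1, hcnt2⟩
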